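/- arXiv:0804.0330 — 4 statements merged into one kernel-verified Lean document; each statement's English description precedes it below -/
import Mathlib

section
/- In the two-component case with rates $f_1 > 0$, $f_2 = 0$, masses $\rho_1 \in (0,1)$, $\rho_2 = 1 - \rho_1$, and uniform initial data $u_i(y,0) = \rho_i$, the functions defined by $u_1(y,t) = 1$, $u_2(y,t) = 0$, $v(y,t) = f_1(\rho_1 - y)$ for $y < y_C(t) := \rho_1(1 - e^{-f_1 t})$, and $u_1(y,t) = \rho_1 e^{-f_1 t}/(\rho_1 e^{-f_1 t} + \rho_2)$, $u_2(y,t) = \rho_2/(\rho_1 e^{-f_1 t} + \rho_2)$, $v(y,t) = (1-y) f_1 \rho_1 e^{-f_1 t}/(\rho_1 e^{-f_1 t} + \rho_2)$ for $y > y_C(t)$, satisfy the equations $\partial_t u_i + \partial_y(v u_i) = -f_i u_i$ ($i=1,2$) and $u_1 + u_2 = 1$ on each of the two open regions $\{y < y_C(t)\}$ and $\{y > y_C(t)\}$. -/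
/-- Two-component example with `f₂ = 0` and uniform initial data: the explicit piecewise
formulas satisfy the continuity equations and `u₁ + u₂ = 1` on each of the two open
regions `{y < y_C(t)}` and `{y > y_C(t)}`, where `y_C(t) = ρ₁(1 - e^{-f₁ t})`. -/
theorem stmt_9 (f1 ρ1 : ℝ) (hf1 : 0 < f1) (hρ1 : ρ1 ∈ Set.Ioo (0:ℝ) 1)
    (ρ2 : ℝ) (hρ2 : ρ2 = 1 - ρ1)
    (yC : ℝ → ℝ) (hyC : ∀ t, yC t = ρ1 * (1 - Real.exp (-f1 * t))) :
    -- region y < y_C(t): u₁ = 1, u₂ = 0, v(y,t) = f₁(ρ₁ - y)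
    (∀ t : ℝ, 0 < t → ∀ y ∈ Set.Ico (0:ℝ) 1, y < yC t →
      (deriv (fun _ : ℝ => (1:ℝ)) t + deriv (fun z => f1 * (ρ1 - z) * 1) y = -(f1 * 1)) ∧
      (deriv (fun _ : ℝ => (0:ℝ)) t + deriv (fun z => f1 * (ρ1 - z) * 0) y = -(0 * 0)) ∧
      (1 + (0:ℝ) = 1)) ∧
    -- region y > y_C(t): u₁ = ρ₁e^{-f₁t}/D, u₂ = ρ₂/D, v = (1-y)f₁ρ₁e^{-f₁t}/D
    (∀ t : ℝ, 0 < t → ∀ y ∈ Set.Ico (0:ℝ) 1, yC t < y →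
      (deriv (fun τ => ρ1 * Real.exp (-f1 * τ) / (ρ1 * Real.exp (-f1 * τ) + ρ2)) t +
        deriv (fun z => ((1 - z) * f1 * (ρ1 * Real.exp (-f1 * t)) / (ρ1 * Real.exp (-f1 * t) + ρ2)) *
          (ρ1 * Real.exp (-f1 * t) / (ρ1 * Real.exp (-f1 * t) + ρ2))) y
        = -(f1 * (ρ1 * Real.exp (-f1 * t) / (ρ1 * Real.exp (-f1 * t) + ρ2)))) ∧
      (deriv (fun τ => ρ2 / (ρ1 * Real.exp (-f1 * τ) + ρ2)) t +
        deriv (fun z => ((1 - z) * f1 * (ρ1 * Real.exp (-f1 * t)) / (ρ1 * Real.exp (-f1 * t) + ρ2)) *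
          (ρ2 / (ρ1 * Real.exp (-f1 * t) + ρ2))) y
        = -(0 * (ρ2 / (ρ1 * Real.exp (-f1 * t) + ρ2)))) ∧
      (ρ1 * Real.exp (-f1 * t) / (ρ1 * Real.exp (-f1 * t) + ρ2) +
        ρ2 / (ρ1 * Real.exp (-f1 * t) + ρ2) = 1)) := by
  obtain ⟨hρ1pos, hρ1lt⟩ := hρ1
  have hρ2pos : 0 < ρ2 := by rw [hρ2]; linarith
  constructor
  · intro t ht y hy hlt
    refine ⟨?_, ?_, by norm_num⟩
    · have h : HasDerivAt (fun z : ℝ => f1 * (ρ1 - z) * 1) (f1 * (-1) * 1) y := by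
        exact (((hasDerivAt_id y).const_sub ρ1).const_mul f1).mul_const 1
      rw [h.deriv, deriv_const]; ring
    · have h : HasDerivAt (fun z : ℝ => f1 * (ρ1 - z) * 0) (f1 * (-1) * 0) y := by
        exact (((hasDerivAt_id y).const_sub ρ1).const_mul f1).mul_const 0
      rw [h.deriv, deriv_const]; ring
  · intro t ht y hy hlt
    have hEpos : 0 < ρ1 * Real.exp (-f1 * t) := mul_pos hρ1pos (Real.exp_pos _)
    have hDpos : 0 < ρ1 * Real.exp (-f1 * t) + ρ2 := by linarith
    have hDne : ρ1 * Real.exp (-f1 * t) + ρ2 ≠ 0 := ne_of_gt hDpos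
    -- time derivative building blocks
    have hexp : HasDerivAt (fun τ : ℝ => ρ1 * Real.exp (-f1 * τ))
        (ρ1 * (Real.exp (-f1 * t) * (-f1))) t := by
      have h1 : HasDerivAt (fun τ : ℝ => -f1 * τ) (-f1) t := by
        simpa using (hasDerivAt_id t).const_mul (-f1)
      exact (h1.exp).const_mul ρ1
    have hDen : HasDerivAt (fun τ : ℝ => ρ1 * Real.exp (-f1 * τ) + ρ2)
        (ρ1 * (Real.exp (-f1 * t) * (-f1))) t := hexp.add_const ρ2
    refine ⟨?_, ?_, ?_⟩
    · have h1 : HasDerivAt (fun τ => ρ1 * Real.exp (-f1 * τ) / (ρ1 * Real.exp (-f1 * τ) + ρ2))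
          ((ρ1 * (Real.exp (-f1 * t) * (-f1)) * (ρ1 * Real.exp (-f1 * t) + ρ2) -
            ρ1 * Real.exp (-f1 * t) * (ρ1 * (Real.exp (-f1 * t) * (-f1)))) / (ρ1 * Real.exp (-f1 * t) + ρ2) ^ 2) t :=
        hexp.div hDen hDne
      have h2 : HasDerivAt (fun z : ℝ =>
          ((1 - z) * f1 * (ρ1 * Real.exp (-f1 * t)) / (ρ1 * Real.exp (-f1 * t) + ρ2)) * (ρ1 * Real.exp (-f1 * t) / (ρ1 * Real.exp (-f1 * t) + ρ2)))
          (((-1) * f1 * (ρ1 * Real.exp (-f1 * t)) / (ρ1 * Real.exp (-f1 * t) + ρ2)) * (ρ1 * Real.exp (-f1 * t) / (ρ1 * Real.exp (-f1 * t) + ρ2))) y := by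
        exact (((((hasDerivAt_id y).const_sub 1).mul_const f1).mul_const (ρ1 * Real.exp (-f1 * t))).div_const
          (ρ1 * Real.exp (-f1 * t) + ρ2)).mul_const (ρ1 * Real.exp (-f1 * t) / (ρ1 * Real.exp (-f1 * t) + ρ2))
      rw [h1.deriv, h2.deriv]
      field_simp
      ring
    · have h1 : HasDerivAt (fun τ => ρ2 / (ρ1 * Real.exp (-f1 * τ) + ρ2))
          ((0 * (ρ1 * Real.exp (-f1 * t) + ρ2) - ρ2 * (ρ1 * (Real.exp (-f1 * t) * (-f1)))) / (ρ1 * Real.exp (-f1 * t) + ρ2) ^ 2) t :=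
        (hasDerivAt_const t ρ2).div hDen hDne
      have h2 : HasDerivAt (fun z : ℝ =>
          ((1 - z) * f1 * (ρ1 * Real.exp (-f1 * t)) / (ρ1 * Real.exp (-f1 * t) + ρ2)) * (ρ2 / (ρ1 * Real.exp (-f1 * t) + ρ2)))
          (((-1) * f1 * (ρ1 * Real.exp (-f1 * t)) / (ρ1 * Real.exp (-f1 * t) + ρ2)) * (ρ2 / (ρ1 * Real.exp (-f1 * t) + ρ2))) y := by
        exact (((((hasDerivAt_id y).const_sub 1).mul_const f1).mul_const (ρ1 * Real.exp (-f1 * t))).div_const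
          (ρ1 * Real.exp (-f1 * t) + ρ2)).mul_const (ρ2 / (ρ1 * Real.exp (-f1 * t) + ρ2))
      rw [h1.deriv, h2.deriv]
      field_simp
      ring
    · rw [← add_div, div_self hDne]
end

section
/- Assume $\sup_i f_i < \infty$ and that $u_i, v$ satisfy the continuity equations, the incompressibility constraint, the velocity formula $v(y,t)=\sum_j f_j \int_y^1 u_j(z,t)dz$, and the mass conservation $\int_0^1 u_i(z,t)\,dz = \rho_i$ for all $t\ge 0$. Then the boundary condition $u_i(0,t) = f_i\rho_i / \sum_j f_j \rho_j$ holds for all $t \ge 0$ and each $i$. -/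
open MeasureTheory

/-- If `sup fᵢ < ∞` and `uᵢ, v` satisfy the continuity equations, the incompressibility
constraint, the velocity formula and mass conservation, then the boundary condition
`uᵢ(0,t) = fᵢρᵢ / ∑ⱼ fⱼρⱼ` holds. -/
theorem stmt_11 (f ρ : ℕ → ℝ) (hf : ∀ i, 0 < f i) (hfb : ∃ M, ∀ i, f i ≤ M)
    (hρ : ∀ i, 0 < ρ i) (hρ1 : ∑' i, ρ i = 1)
    (u : ℕ → ℝ → ℝ → ℝ) (v : ℝ → ℝ → ℝ)
    (hnn : ∀ i, ∀ y ∈ Set.Ico (0:ℝ) 1, ∀ t ∈ Set.Ici (0:ℝ), 0 ≤ u i y t)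
    (hcont : ∀ i, ∀ y ∈ Set.Ico (0:ℝ) 1, ∀ t ∈ Set.Ici (0:ℝ),
      deriv (fun τ => u i y τ) t + deriv (fun z => v z t * u i z t) y = -(f i * u i y t))
    (hone : ∀ y ∈ Set.Ico (0:ℝ) 1, ∀ t ∈ Set.Ici (0:ℝ), ∑' j, u j y t = 1)
    (hvel : ∀ y ∈ Set.Ico (0:ℝ) 1, ∀ t ∈ Set.Ici (0:ℝ),
      v y t = ∑' j, f j * ∫ z in Set.Ioo y 1, u j z t)
    (hmass : ∀ i, ∀ t ∈ Set.Ici (0:ℝ), ∫ z in Set.Ioo (0:ℝ) 1, u i z t = ρ i)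
    -- integration by parts (using `v(1,t) = 0`) assumed valid:
    (hibp : ∀ i, ∀ t ∈ Set.Ici (0:ℝ),
      ∫ y in Set.Ioo (0:ℝ) 1, deriv (fun z => v z t * u i z t) y = -(v 0 t * u i 0 t))
    -- interchange of time differentiation and integration assumed valid:
    (hdt : ∀ i, ∀ t ∈ Set.Ici (0:ℝ),
      HasDerivAt (fun τ => ∫ y in Set.Ioo (0:ℝ) 1, u i y τ)
        (∫ y in Set.Ioo (0:ℝ) 1, deriv (fun τ => u i y τ) t) t) :
    ∀ i, ∀ t ∈ Set.Ici (0:ℝ), u i 0 t = f i * ρ i / ∑' j, f j * ρ j := by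
  intro i t ht
  obtain ⟨M, hM⟩ := hfb
  have h0mem : (0:ℝ) ∈ Set.Ico (0:ℝ) 1 := ⟨le_refl 0, one_pos⟩
  -- summability of ρ and of f * ρ
  have hρsum : Summable ρ := by
    by_contra h
    rw [tsum_eq_zero_of_not_summable h] at hρ1
    norm_num at hρ1
  have hbsum : Summable (fun j => f j * ρ j) := by
    refine Summable.of_nonneg_of_le (fun j => mul_nonneg (hf j).le (hρ j).le)
      (fun j => mul_le_mul_of_nonneg_right (hM j) (hρ j).le) (hρsum.mul_left M)
  have hSpos : 0 < ∑' j, f j * ρ j :=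
    Summable.tsum_pos hbsum (fun j => mul_nonneg (hf j).le (hρ j).le) 0 (mul_pos (hf 0) (hρ 0))
  -- v 0 t = ∑' f j * ρ j
  have hv0 : v 0 t = ∑' j, f j * ρ j := by
    rw [hvel 0 h0mem t ht]
    exact tsum_congr fun j => by rw [hmass j t ht]
  have hv0pos : 0 < v 0 t := hv0 ▸ hSpos
  -- the time derivative of the mass is zero
  have hdzero : ∀ k, ∫ y in Set.Ioo (0:ℝ) 1, deriv (fun τ => u k y τ) t = 0 := by
    intro k
    have h1 : HasDerivWithinAt (fun τ => ∫ y in Set.Ioo (0:ℝ) 1, u k y τ)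
        (∫ y in Set.Ioo (0:ℝ) 1, deriv (fun τ => u k y τ) t) (Set.Ici t) t :=
      (hdt k t ht).hasDerivWithinAt
    have h2 : HasDerivWithinAt (fun τ => ∫ y in Set.Ioo (0:ℝ) 1, u k y τ)
        (0 : ℝ) (Set.Ici t) t := by
      refine (hasDerivWithinAt_const t (Set.Ici t) (ρ k)).congr (fun x hx => ?_) ?_
      · exact hmass k x (Set.mem_Ici.mpr (le_trans (Set.mem_Ici.mp ht) (Set.mem_Ici.mp hx)))
      · exact hmass k t ht
    exact UniqueDiffWithinAt.eq_deriv _ (uniqueDiffOn_Ici t t Set.self_mem_Ici) h1 h2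
  -- integrability of u k · t on Ioo 0 1
  have hint : ∀ k, IntegrableOn (fun z => u k z t) (Set.Ioo (0:ℝ) 1) := by
    intro k
    by_contra h
    have := hmass k t ht
    rw [integral_undef h] at this
    exact (hρ k).ne this
  -- key inequality: v 0 t * u k 0 t ≤ f k * ρ k, for every k
  have hkey : ∀ k, v 0 t * u k 0 t ≤ f k * ρ k := by
    intro k
    by_cases hI : IntegrableOn (fun y => deriv (fun z => v z t * u k z t) y)
        (Set.Ioo (0:ℝ) 1)
    · -- split the integral of the continuity equation
      have heq : ∀ y ∈ Set.Ioo (0:ℝ) 1,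
          deriv (fun τ => u k y τ) t
            = -(f k * u k y t) - deriv (fun z => v z t * u k z t) y := by
        intro y hy
        have := hcont k y (Set.Ioo_subset_Ico_self hy) t ht
        linarith
      have hci : ∫ y in Set.Ioo (0:ℝ) 1, deriv (fun τ => u k y τ) t
          = ∫ y in Set.Ioo (0:ℝ) 1,
              (-(f k * u k y t) - deriv (fun z => v z t * u k z t) y) :=
        setIntegral_congr_fun measurableSet_Ioo heq
      have hsplit : ∫ y in Set.Ioo (0:ℝ) 1,
            (-(f k * u k y t) - deriv (fun z => v z t * u k z t) y)
          = -(f k * ρ k) + v 0 t * u k 0 t := by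
        have ha : IntegrableOn (fun y => -(f k * u k y t)) (Set.Ioo (0:ℝ) 1) := by
          have := ((hint k).const_mul (f k)).neg
          exact this
        rw [integral_sub ha hI, hibp k t ht, integral_neg, integral_const_mul,
          hmass k t ht]
        ring
      have : (0:ℝ) = -(f k * ρ k) + v 0 t * u k 0 t := by
        rw [← hsplit, ← hci, hdzero k]
      linarith
    · have := hibp k t ht
      rw [integral_undef hI] at this
      have h0 : v 0 t * u k 0 t = 0 := by linarith
      rw [h0]; exact mul_nonneg (hf k).le (hρ k).le
  -- sum of v0 * u j 0 t equals sum of f j * ρ j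
  have hasum : Summable (fun j => v 0 t * u j 0 t) :=
    Summable.of_nonneg_of_le
      (fun j => mul_nonneg hv0pos.le (hnn j 0 h0mem t ht)) hkey hbsum
  have hsums : ∑' j, v 0 t * u j 0 t = ∑' j, f j * ρ j := by
    rw [tsum_mul_left, hone 0 h0mem t ht, mul_one, hv0]
  -- difference has zero sum, nonneg terms, so each term vanishes
  have hdiff : ∀ k, f k * ρ k - v 0 t * u k 0 t = 0 := by
    intro k
    have hds : Summable (fun j => f j * ρ j - v 0 t * u j 0 t) := hbsum.sub hasum
    have hdsum : ∑' j, (f j * ρ j - v 0 t * u j 0 t) = 0 := by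
      rw [Summable.tsum_sub hbsum hasum, hsums, sub_self]
    have hle := Summable.le_tsum hds k (fun j _ => sub_nonneg.mpr (hkey j))
    have hge : 0 ≤ f k * ρ k - v 0 t * u k 0 t := sub_nonneg.mpr (hkey k)
    rw [hdsum] at hle
    linarith
  have : v 0 t * u i 0 t = f i * ρ i := by have := hdiff i; linarith
  rw [eq_div_iff hSpos.ne', ← hv0, mul_comm (u i 0 t) (v 0 t), this]
end

section
/- Define $y_C(t) = 1 - e^{-at} + (at)^b \Gamma(1-b, at)$ for $a > 0$ and $b \in (0,1)$. Then as $t \to 0^+$, $y_C(t) = \Gamma(1-b)\, a^b\, t^b + O(t)$; in particular $\lim_{t\to 0^+} y_C(t)/t^b = a^b\,\Gamma(1-b)$. -/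
open MeasureTheory Set Real Filter

/-- The upper incomplete gamma function `Γ(z,p) = ∫_p^∞ e^{-w} w^{z-1} dw`. -/
noncomputable def igamma (z p : ℝ) : ℝ := ∫ w in Set.Ioi p, Real.exp (-w) * w ^ (z - 1)

lemma gamma_split {b : ℝ} (hb : b ∈ Set.Ioo (0:ℝ) 1) {x : ℝ} (hx : 0 < x) :
    Real.Gamma (1 - b) =
      (∫ w in Ioc 0 x, Real.exp (-w) * w ^ ((1 - b) - 1)) + igamma (1 - b) x := by
  have hs : (0:ℝ) < 1 - b := by linarith [hb.2]
  rw [Real.Gamma_eq_integral hs, igamma,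
    ← setIntegral_union (Ioc_disjoint_Ioi le_rfl) measurableSet_Ioi
      ((Real.GammaIntegral_convergent hs).mono_set Ioc_subset_Ioi_self)
      ((Real.GammaIntegral_convergent hs).mono_set (Ioi_subset_Ioi hx.le)),
    Ioc_union_Ioi_eq_Ioi hx.le]

lemma I_bound {b : ℝ} (hb : b ∈ Set.Ioo (0:ℝ) 1) {x : ℝ} (hx : 0 < x) :
    (∫ w in Ioc 0 x, Real.exp (-w) * w ^ ((1 - b) - 1)) ≤ x ^ (1 - b) / (1 - b) := by
  have hs : (0:ℝ) < 1 - b := by linarith [hb.2]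
  have h1 : (∫ w in Ioc 0 x, Real.exp (-w) * w ^ ((1 - b) - 1)) ≤
      ∫ w in Ioc 0 x, w ^ ((1 - b) - 1) := by
    apply setIntegral_mono_on
    · exact (Real.GammaIntegral_convergent hs).mono_set Ioc_subset_Ioi_self
    · exact (intervalIntegrable_iff_integrableOn_Ioc_of_le hx.le).mp
        (intervalIntegral.intervalIntegrable_rpow' (by simp; linarith [hb.1]))
    · exact measurableSet_Ioc
    · intro w hw
      have := Real.exp_le_one_iff.mpr (neg_nonpos.mpr hw.1.le)
      nlinarith [Real.rpow_nonneg hw.1.le ((1 - b) - 1), Real.exp_pos (-w)]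
  have h2 : (∫ w in Ioc 0 x, w ^ ((1 - b) - 1)) = x ^ (1 - b) / (1 - b) := by
    rw [← intervalIntegral.integral_of_le hx.le,
      integral_rpow (Or.inl (by simp; linarith [hb.1]))]
    rw [Real.zero_rpow (by linarith [hb.2] : (1:ℝ) - b - 1 + 1 ≠ 0)]
    ring_nf
  linarith

lemma I_nonneg {b x : ℝ} :
    0 ≤ ∫ w in Ioc 0 x, Real.exp (-w) * w ^ ((1 - b) - 1) := by
  apply setIntegral_nonneg measurableSet_Ioc
  intro w hw
  exact mul_nonneg (Real.exp_pos _).le (Real.rpow_nonneg hw.1.le _)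

/-- For `y_C(t) = 1 - e^{-at} + (at)^b Γ(1-b, at)` with `b ∈ (0,1)`:
`y_C(t) = Γ(1-b) a^b t^b + O(t)` as `t → 0⁺`, and `y_C(t)/t^b → a^b Γ(1-b)`. -/
theorem stmt_16 (a b : ℝ) (ha : 0 < a) (hb : b ∈ Set.Ioo (0:ℝ) 1)
    (yC : ℝ → ℝ)
    (hyC : ∀ t, yC t = 1 - Real.exp (-(a * t)) + (a * t) ^ b * igamma (1 - b) (a * t)) :
    (fun t => yC t - Real.Gamma (1 - b) * a ^ b * t ^ b)
      =O[nhdsWithin 0 (Set.Ioi 0)] (fun t => t) ∧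
    Filter.Tendsto (fun t => yC t / t ^ b) (nhdsWithin 0 (Set.Ioi 0))
      (nhds (a ^ b * Real.Gamma (1 - b))) := by
  set G := Real.Gamma (1 - b) * a ^ b with hG
  have hb1 : (0:ℝ) < 1 - b := by linarith [hb.2]
  -- key pointwise bound
  have key : ∀ t ∈ Ioi (0:ℝ), |yC t - G * t ^ b| ≤ (a + a / (1 - b)) * t := by
    intro t ht
    have ht : (0:ℝ) < t := ht
    have hat : 0 < a * t := mul_pos ha ht
    set I := ∫ w in Ioc 0 (a*t), Real.exp (-w) * w ^ ((1 - b) - 1) with hI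
    have hsplit := gamma_split hb hat
    have heq : yC t - G * t ^ b =
        (1 - Real.exp (-(a * t))) - (a * t) ^ b * I := by
      rw [hyC t, hG]
      have : (a * t) ^ b = a ^ b * t ^ b := Real.mul_rpow ha.le ht.le
      have h2 : igamma (1 - b) (a * t) = Real.Gamma (1 - b) - I := by linarith [hsplit]
      rw [h2, this]; ring
    rw [heq]
    have hA0 : 0 ≤ 1 - Real.exp (-(a * t)) := by
      have := Real.exp_le_one_iff.mpr (neg_nonpos.mpr hat.le); linarith
    have hA1 : 1 - Real.exp (-(a * t)) ≤ a * t := by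
      have := Real.add_one_le_exp (-(a * t)); linarith
    have hB0 : 0 ≤ (a * t) ^ b * I := mul_nonneg (Real.rpow_nonneg hat.le _) I_nonneg
    have hB1 : (a * t) ^ b * I ≤ a * t / (1 - b) := by
      have h1 : (a * t) ^ b * I ≤ (a * t) ^ b * ((a*t) ^ (1 - b) / (1 - b)) :=
        mul_le_mul_of_nonneg_left (I_bound hb hat) (Real.rpow_nonneg hat.le _)
      have h2 : (a * t) ^ b * ((a*t) ^ (1 - b) / (1 - b)) = a * t / (1 - b) := by
        rw [mul_div_assoc', ← Real.rpow_add hat]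
        norm_num
      linarith
    have hCt : (a + a / (1 - b)) * t = a * t + a * t / (1 - b) := by ring
    have hpos1 : 0 ≤ a * t / (1 - b) := div_nonneg hat.le hb1.le
    rw [abs_le]
    constructor <;> linarith
  have hO : (fun t => yC t - G * t ^ b) =O[nhdsWithin 0 (Set.Ioi 0)] (fun t => t) := by
    rw [Asymptotics.isBigO_iff]
    refine ⟨a + a / (1 - b), ?_⟩
    filter_upwards [self_mem_nhdsWithin] with t ht
    have h := key t ht
    rw [Real.norm_eq_abs, Real.norm_eq_abs, abs_of_pos (show (0:ℝ) < t from ht)]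
    exact h
  constructor
  · exact hO.congr_left (fun t => by rw [hG])
  · -- tendsto part
    have hdiff : Tendsto (fun t => (yC t - G * t ^ b) / t ^ b)
        (nhdsWithin 0 (Set.Ioi 0)) (nhds 0) := by
      rw [tendsto_zero_iff_abs_tendsto_zero]
      apply squeeze_zero' (g := fun t => (a + a / (1 - b)) * t ^ (1 - b))
      · filter_upwards [self_mem_nhdsWithin] with t ht
        exact abs_nonneg ((yC t - G * t ^ b) / t ^ b)
      · filter_upwards [self_mem_nhdsWithin] with t ht
        have ht : (0:ℝ) < t := ht
        show |(yC t - G * t ^ b) / t ^ b| ≤ _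
        rw [abs_div, abs_of_nonneg (Real.rpow_nonneg ht.le b),
          div_le_iff₀ (Real.rpow_pos_of_pos ht b)]
        calc |yC t - G * t ^ b| ≤ (a + a / (1 - b)) * t := key t ht
          _ = (a + a / (1 - b)) * t ^ (1 - b) * t ^ b := by
              have h3 : t ^ (1 - b) * t ^ b = t := by
                rw [← Real.rpow_add ht, show (1:ℝ) - b + b = 1 by ring, Real.rpow_one]
              rw [mul_assoc, h3]
      · have : Tendsto (fun t : ℝ => t ^ (1 - b)) (nhdsWithin 0 (Set.Ioi 0)) (nhds 0) := by
          have hcont : ContinuousAt (fun t : ℝ => t ^ (1 - b)) 0 :=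
            Real.continuousAt_rpow_const 0 (1 - b) (Or.inr hb1.le)
          have := hcont.continuousWithinAt (s := Set.Ioi 0)
          simpa [Real.zero_rpow hb1.ne'] using this.tendsto
        simpa using this.const_mul (a + a / (1 - b))
    have : Tendsto (fun t => (yC t - G * t ^ b) / t ^ b + G)
        (nhdsWithin 0 (Set.Ioi 0)) (nhds (0 + G)) := hdiff.add tendsto_const_nhds
    rw [zero_add] at this
    have heq : Tendsto (fun t => yC t / t ^ b) (nhdsWithin 0 (Set.Ioi 0)) (nhds G) := by
      apply this.congr'
      filter_upwards [self_mem_nhdsWithin] with t ht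
      have ht : (0:ℝ) < t := ht
      field_simp
      ring
    rw [hG, mul_comm] at heq
    exact heq
end

section
/- Define $y_C(t) = 1 - e^{-at}\left(1 - \frac{at}{b-1}\right) - \frac{(at)^b}{b-1}\Gamma(2-b, at)$ for $a > 0$ and $b \in (1,2)$. Then as $t \to 0^+$, $y_C(t) = \frac{ab}{b-1}t - \frac{\Gamma(2-b)\,a^b}{b-1}\,t^b + O(t^2)$; in particular $\lim_{t \to 0^+} y_C(t)/t = ab/(b-1)$. -/
open Set MeasureTheory Real Filter Asymptotics

lemma igamma_split {s x : ℝ} (hs : 0 < s) (hx : 0 ≤ x) :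
    Real.Gamma s = (∫ w in Set.Ioc 0 x, Real.exp (-w) * w ^ (s - 1)) + igamma s x := by
  rw [Real.Gamma_eq_integral hs, igamma, ← Set.Ioc_union_Ioi_eq_Ioi hx,
    MeasureTheory.setIntegral_union (Set.Ioc_disjoint_Ioi le_rfl) measurableSet_Ioi
      ((Real.GammaIntegral_convergent hs).mono_set Set.Ioc_subset_Ioi_self)
      ((Real.GammaIntegral_convergent hs).mono_set (Set.Ioi_subset_Ioi hx))]

lemma lowinc_nonneg {s x : ℝ} :
    0 ≤ ∫ w in Set.Ioc 0 x, Real.exp (-w) * w ^ (s - 1) := by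
  apply MeasureTheory.setIntegral_nonneg measurableSet_Ioc
  intro w hw
  exact mul_nonneg (Real.exp_pos _).le (Real.rpow_nonneg hw.1.le _)

lemma lowinc_le {s x : ℝ} (hs : 0 < s) (hs1 : s < 1) (hx : 0 ≤ x) :
    (∫ w in Set.Ioc 0 x, Real.exp (-w) * w ^ (s - 1)) ≤ x ^ s / s := by
  have h1 : (∫ w in Set.Ioc 0 x, Real.exp (-w) * w ^ (s - 1)) ≤
      ∫ w in Set.Ioc 0 x, w ^ (s - 1) := by
    apply MeasureTheory.setIntegral_mono_on
    · exact (Real.GammaIntegral_convergent hs).mono_set Set.Ioc_subset_Ioi_self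
    · exact (intervalIntegrable_iff_integrableOn_Ioc_of_le hx).1
        (intervalIntegral.intervalIntegrable_rpow' (by linarith))
    · exact measurableSet_Ioc
    · intro w hw
      have hw0 : 0 < w := hw.1
      have : Real.exp (-w) ≤ 1 := Real.exp_le_one_iff.2 (by linarith)
      nlinarith [Real.rpow_nonneg hw0.le (s - 1)]
  have h2 : (∫ w in Set.Ioc 0 x, w ^ (s - 1)) = x ^ s / s := by
    rw [← intervalIntegral.integral_of_le hx, integral_rpow (Or.inl (by linarith))]
    rw [Real.zero_rpow (by linarith : s - 1 + 1 ≠ 0)]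
    ring_nf
  linarith

lemma exp_neg_taylor {x : ℝ} (hx : 0 ≤ x) : |Real.exp (-x) - (1 - x)| ≤ x ^ 2 := by
  have h1 : 1 - x ≤ Real.exp (-x) := by nlinarith [Real.add_one_le_exp (-x)]
  have h2 : Real.exp (-x) * Real.exp x = 1 := by rw [← Real.exp_add]; simp
  have h3 : 1 + x ≤ Real.exp x := by nlinarith [Real.add_one_le_exp x]
  have h5 : Real.exp (-x) * (1 + x) ≤ 1 := by
    nlinarith [mul_le_mul_of_nonneg_left h3 (Real.exp_pos (-x)).le]
  rw [abs_le]
  constructor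
  · nlinarith
  · nlinarith [pow_nonneg hx 3, sq_nonneg x]

/-- For `y_C(t) = 1 - e^{-at}(1 - at/(b-1)) - (at)^b/(b-1) Γ(2-b, at)` with `b ∈ (1,2)`:
`y_C(t) = (ab/(b-1)) t - (Γ(2-b) a^b/(b-1)) t^b + O(t²)` as `t → 0⁺`, and
`y_C(t)/t → ab/(b-1)`. -/
theorem stmt_17 (a b : ℝ) (ha : 0 < a) (hb : b ∈ Set.Ioo (1:ℝ) 2)
    (yC : ℝ → ℝ)
    (hyC : ∀ t, yC t = 1 - Real.exp (-(a * t)) * (1 - a * t / (b - 1)) -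
        (a * t) ^ b / (b - 1) * igamma (2 - b) (a * t)) :
    (fun t => yC t - (a * b / (b - 1) * t - Real.Gamma (2 - b) * a ^ b / (b - 1) * t ^ b))
      =O[nhdsWithin 0 (Set.Ioi 0)] (fun t => t ^ 2) ∧
    Filter.Tendsto (fun t => yC t / t) (nhdsWithin 0 (Set.Ioi 0))
      (nhds (a * b / (b - 1))) := by
  obtain ⟨hb1, hb2⟩ := hb
  have hb1' : (0:ℝ) < b - 1 := by linarith
  have hb2' : (0:ℝ) < 2 - b := by linarith
  set C : ℝ := a ^ 2 * (1 + 2 / (b - 1) + 1 / ((b - 1) * (2 - b))) with hC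
  -- pointwise bound
  have key : ∀ t : ℝ, 0 < t → a * t ≤ 1 →
      |yC t - (a * b / (b - 1) * t - Real.Gamma (2 - b) * a ^ b / (b - 1) * t ^ b)|
        ≤ C * t ^ 2 := by
    intro t ht htl
    set x := a * t with hxdef
    have hx : 0 < x := by positivity
    set L : ℝ := ∫ w in Set.Ioc 0 x, Real.exp (-w) * w ^ (2 - b - 1) with hL
    have hsplit := igamma_split (s := 2 - b) (x := x) hb2' hx.le
    have higamma : igamma (2 - b) x = Real.Gamma (2 - b) - L := by
      rw [hsplit]; ring
    have hL0 : 0 ≤ L := lowinc_nonneg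
    have hLle : L ≤ x ^ (2 - b) / (2 - b) := lowinc_le hb2' (by linarith) hx.le
    have hmul : a ^ b * t ^ b = x ^ b := (Real.mul_rpow ha.le ht.le).symm
    have hxb0 : 0 ≤ x ^ b := Real.rpow_nonneg hx.le b
    have hx2 : x ^ b * x ^ (2 - b) = x ^ 2 := by
      rw [← Real.rpow_add hx, ← Real.rpow_two]
      norm_num
    set r : ℝ := Real.exp (-x) - (1 - x) with hrdef
    have hr : |r| ≤ x ^ 2 := exp_neg_taylor hx.le
    have hexpand : yC t - (a * b / (b - 1) * t - Real.Gamma (2 - b) * a ^ b / (b - 1) * t ^ b)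
        = -r * (1 - x / (b - 1)) - x ^ 2 / (b - 1) + x ^ b * L / (b - 1) := by
      rw [hyC t, higamma]
      have hE : Real.exp (-x) = (1 - x) + r := by rw [hrdef]; ring
      rw [hE]
      have : Real.Gamma (2 - b) * a ^ b / (b - 1) * t ^ b
          = Real.Gamma (2 - b) * (a ^ b * t ^ b) / (b - 1) := by ring
      rw [this, hmul]
      field_simp
      ring
    rw [hexpand]
    have hbnd1 : |(-r) * (1 - x / (b - 1))| ≤ x ^ 2 * (1 + 1 / (b - 1)) := by
      rw [abs_mul, abs_neg]
      have h1 : |1 - x / (b - 1)| ≤ 1 + 1 / (b - 1) := by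
        rw [abs_le]
        constructor
        · have h2 : x / (b - 1) ≤ 1 / (b - 1) := by gcongr
          linarith
        · have : 0 ≤ x / (b - 1) := by positivity
          have : 0 ≤ 1 / (b - 1) := by positivity
          linarith
      exact mul_le_mul hr h1 (abs_nonneg _) (by positivity)
    have hbnd3 : x ^ b * L / (b - 1) ≤ x ^ 2 / ((b - 1) * (2 - b)) := by
      have hT : L * (2 - b) ≤ x ^ (2 - b) := (le_div_iff₀ hb2').mp hLle
      have hT2 : x ^ b * (L * (2 - b)) ≤ x ^ b * x ^ (2 - b) :=
        mul_le_mul_of_nonneg_left hT hxb0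
      rw [hx2] at hT2
      rw [div_le_div_iff₀ hb1' (by positivity)]
      nlinarith [mul_le_mul_of_nonneg_left hT2 hb1'.le]
    have hbnd3' : 0 ≤ x ^ b * L / (b - 1) := by positivity
    have htri : |(-r) * (1 - x / (b - 1)) - x ^ 2 / (b - 1) + x ^ b * L / (b - 1)|
        ≤ |(-r) * (1 - x / (b - 1))| + x ^ 2 / (b - 1) + x ^ b * L / (b - 1) := by
      calc |(-r) * (1 - x / (b - 1)) - x ^ 2 / (b - 1) + x ^ b * L / (b - 1)|
          ≤ |(-r) * (1 - x / (b - 1)) - x ^ 2 / (b - 1)| + |x ^ b * L / (b - 1)| := abs_add_le _ _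
        _ ≤ |(-r) * (1 - x / (b - 1))| + |x ^ 2 / (b - 1)| + |x ^ b * L / (b - 1)| := by
            linarith [abs_sub (-r * (1 - x / (b - 1))) (x ^ 2 / (b - 1))]
        _ = |(-r) * (1 - x / (b - 1))| + x ^ 2 / (b - 1) + x ^ b * L / (b - 1) := by
            rw [abs_of_nonneg (by positivity : (0:ℝ) ≤ x ^ 2 / (b - 1)),
              abs_of_nonneg hbnd3']
    have hCx : C * t ^ 2 = x ^ 2 * (1 + 2 / (b - 1) + 1 / ((b - 1) * (2 - b))) := by
      rw [hC, hxdef]; ring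
    rw [hCx]
    have hx2div : x ^ 2 / (b - 1) = x ^ 2 * (1 / (b - 1)) := by ring
    calc |(-r) * (1 - x / (b - 1)) - x ^ 2 / (b - 1) + x ^ b * L / (b - 1)|
        ≤ x ^ 2 * (1 + 1 / (b - 1)) + x ^ 2 / (b - 1) + x ^ 2 / ((b - 1) * (2 - b)) := by
          linarith [htri, hbnd1, hbnd3]
      _ = x ^ 2 * (1 + 2 / (b - 1) + 1 / ((b - 1) * (2 - b))) := by ring
  -- Big-O part
  have hmem : Set.Ioo (0:ℝ) (1/a) ∈ nhdsWithin (0:ℝ) (Set.Ioi 0) :=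
    Ioo_mem_nhdsGT_of_mem ⟨le_rfl, by positivity⟩
  have hO : (fun t => yC t - (a * b / (b - 1) * t - Real.Gamma (2 - b) * a ^ b / (b - 1) * t ^ b))
      =O[nhdsWithin 0 (Set.Ioi 0)] (fun t => t ^ 2) := by
    rw [Asymptotics.isBigO_iff]
    refine ⟨C, ?_⟩
    filter_upwards [hmem] with t ht
    have ht0 : 0 < t := ht.1
    have htl : a * t ≤ 1 := by
      have := (lt_div_iff₀ ha).mp ht.2
      linarith
    rw [Real.norm_eq_abs, Real.norm_eq_abs, abs_of_nonneg (by positivity : (0:ℝ) ≤ t ^ 2)]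
    exact key t ht0 htl
  refine ⟨hO, ?_⟩
  -- Tendsto part
  have hlo : (fun t => yC t - (a * b / (b - 1) * t - Real.Gamma (2 - b) * a ^ b / (b - 1) * t ^ b))
      =o[nhdsWithin 0 (Set.Ioi 0)] (fun t : ℝ => t) := by
    refine hO.trans_isLittleO ?_
    have := (Asymptotics.isLittleO_pow_pow (𝕜 := ℝ) (m := 1) (n := 2) one_lt_two)
    simpa [pow_one] using this.mono nhdsWithin_le_nhds
  have h1 : Filter.Tendsto (fun t => (yC t - (a * b / (b - 1) * t -
      Real.Gamma (2 - b) * a ^ b / (b - 1) * t ^ b)) / t)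
      (nhdsWithin 0 (Set.Ioi 0)) (nhds 0) := hlo.tendsto_div_nhds_zero
  have hpow : Filter.Tendsto (fun t : ℝ => t ^ (b - 1)) (nhdsWithin 0 (Set.Ioi 0)) (nhds 0) := by
    have hc : ContinuousAt (fun t : ℝ => t ^ (b - 1)) 0 :=
      Real.continuousAt_rpow_const 0 (b - 1) (Or.inr (by linarith))
    have := hc.tendsto.mono_left (nhdsWithin_le_nhds (s := Set.Ioi (0:ℝ)))
    rwa [Real.zero_rpow (by linarith : b - 1 ≠ 0)] at this
  have h2 : Filter.Tendsto (fun t => (a * b / (b - 1) * t -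
      Real.Gamma (2 - b) * a ^ b / (b - 1) * t ^ b) / t)
      (nhdsWithin 0 (Set.Ioi 0)) (nhds (a * b / (b - 1))) := by
    have heq : ∀ᶠ t in nhdsWithin (0:ℝ) (Set.Ioi 0),
        a * b / (b - 1) - Real.Gamma (2 - b) * a ^ b / (b - 1) * t ^ (b - 1)
        = (a * b / (b - 1) * t - Real.Gamma (2 - b) * a ^ b / (b - 1) * t ^ b) / t := by
      filter_upwards [self_mem_nhdsWithin] with t (ht : 0 < t)
      have : t ^ b = t ^ (b - 1) * t := by
        rw [← Real.rpow_add_one ht.ne' (b - 1)]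
        norm_num
      rw [this]
      field_simp
    have hlim : Filter.Tendsto (fun t : ℝ =>
        a * b / (b - 1) - Real.Gamma (2 - b) * a ^ b / (b - 1) * t ^ (b - 1))
        (nhdsWithin 0 (Set.Ioi 0)) (nhds (a * b / (b - 1))) := by
      have := (tendsto_const_nhds (x := a * b / (b - 1))
        (f := nhdsWithin (0:ℝ) (Set.Ioi 0))).sub
        ((tendsto_const_nhds (x := Real.Gamma (2 - b) * a ^ b / (b - 1))).mul hpow)
      simpa using this
    exact Filter.Tendsto.congr' heq hlim
  have := h1.add h2
  rw [zero_add] at this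
  refine this.congr' ?_
  filter_upwards [self_mem_nhdsWithin] with t (ht : 0 < t)
  rw [← add_div, sub_add_cancel]
end
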